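/- Let S ⊆ K be a compact set. Then co_Φ(S) = co_Φ(Ext_Φ(S)). In particular, if C ⊆ K is compact and is a convex-trace set with respect to Φ, then C = co_Φ(Ext_Φ(C)); that is, a compact Φ-convex-trace set is the Φ-trace convex hull of its Φ-extreme points. -/

import Mathlib

open MeasureTheory Set

section Defs

variable {K : Type*} [TopologicalSpace K] [CompactSpace K]

/-- The canonical injection `δ^Φ : K → Φ*`, `δ^Φ(x)(φ) = φ(x)`. -/
noncomputable def deltaPhi (Φ : Submodule ℝ C(K, ℝ)) (x : K) : WeakDual ℝ ↥Φ :=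
  (ContinuousMap.evalCLM ℝ x).comp Φ.subtypeL

/-- The set `K(Φ) = {Q ∈ Φ* : ‖Q‖ = Q(𝟏) = 1}`. -/
noncomputable def KPhi (Φ : Submodule ℝ C(K, ℝ))
    (h1 : ContinuousMap.const K (1 : ℝ) ∈ Φ) : Set (WeakDual ℝ ↥Φ) :=
  {Q | @Norm.norm (StrongDual ℝ ↥Φ) (@ContinuousLinearMap.hasOpNorm ℝ ℝ ↥Φ ℝ _ _ _ _ _ _ _)
    (WeakDual.toStrongDual Q) = 1 ∧ Q ⟨ContinuousMap.const K (1 : ℝ), h1⟩ = 1}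

end Defs

section DefsTC

variable {K : Type*} [TopologicalSpace K] [CompactSpace K]

/-- A closed set `C ⊆ K` is convex-trace w.r.t. `Φ` if `δ^Φ(C) = δ^Φ(K) ∩ Ĉ` for some
weak*-closed convex subset `Ĉ` of `K(Φ)`. -/
def TraceConvexSet (Φ : Submodule ℝ C(K, ℝ)) (h1 : ContinuousMap.const K (1 : ℝ) ∈ Φ)
    (C : Set K) : Prop :=
  IsClosed C ∧ ∃ Ch : Set (WeakDual ℝ ↥Φ), Ch ⊆ KPhi Φ h1 ∧ IsClosed Ch ∧ Convex ℝ Ch ∧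
    deltaPhi Φ '' C = deltaPhi Φ '' Set.univ ∩ Ch

end DefsTC

section DefsHull

variable {K : Type*} [TopologicalSpace K] [CompactSpace K]

/-- The `Φ`-trace convexification of `S`: the intersection of all convex-trace subsets of `K`
containing `S`. -/
def traceCoHull (Φ : Submodule ℝ C(K, ℝ)) (h1 : ContinuousMap.const K (1 : ℝ) ∈ Φ)
    (S : Set K) : Set K :=
  ⋂₀ {C : Set K | TraceConvexSet Φ h1 C ∧ S ⊆ C}

end DefsHull

section DefsExt

variable {K : Type*} [TopologicalSpace K] [CompactSpace K]

/-- `Ext_Φ(S)`: the `Φ`-extreme points of `S`, i.e. the points `x ∈ S` such that `δ^Φ(x)` is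
an extreme point of the weak*-closed convex hull of `δ^Φ(S)`. -/
def ExtPhi (Φ : Submodule ℝ C(K, ℝ)) (S : Set K) : Set K :=
  {x | x ∈ S ∧
    deltaPhi Φ x ∈ Set.extremePoints ℝ (closure (convexHull ℝ (deltaPhi Φ '' S)))}

end DefsExt


section AuxCompact

variable {E : Type*} [AddCommGroup E] [Module ℝ E] [TopologicalSpace E]
  [IsTopologicalAddGroup E] [ContinuousSMul ℝ E]

lemma myIsCompact_convexJoin {s t : Set E} (hs : IsCompact s) (ht : IsCompact t) :
    IsCompact (convexJoin ℝ s t) := by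
  have heq : convexJoin ℝ s t =
      (fun p : ℝ × E × E => p.1 • p.2.1 + (1 - p.1) • p.2.2) '' (Set.Icc (0:ℝ) 1 ×ˢ s ×ˢ t) := by
    ext z
    constructor
    · intro hz
      rw [mem_convexJoin] at hz
      obtain ⟨a, ha, b, hb, u, v, hu, hv, huv, rfl⟩ := hz
      exact ⟨(u, a, b), ⟨⟨hu, by linarith⟩, ha, hb⟩, by
        simp only; rw [show (1:ℝ) - u = v by linarith]⟩
    · rintro ⟨⟨u, a, b⟩, ⟨⟨hu0, hu1⟩, ha, hb⟩, rfl⟩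
      rw [mem_convexJoin]
      exact ⟨a, ha, b, hb, u, 1 - u, hu0, by linarith, by ring, rfl⟩
  rw [heq]
  exact (isCompact_Icc.prod (hs.prod ht)).image (by fun_prop)

lemma myIsCompact_convexHull_union {s t : Set E} (hs : IsCompact s) (ht : IsCompact t)
    (hsc : Convex ℝ s) (htc : Convex ℝ t) : IsCompact (convexHull ℝ (s ∪ t)) := by
  rcases s.eq_empty_or_nonempty with rfl | hs0
  · simpa [htc.convexHull_eq] using ht
  rcases t.eq_empty_or_nonempty with rfl | ht0
  · simpa [hsc.convexHull_eq] using hs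
  rw [hsc.convexHull_union htc hs0 ht0]
  exact myIsCompact_convexJoin hs ht

lemma myIsCompact_convexHull_biUnion {ι : Type*} (I : Finset ι) (Kf : ι → Set E)
    (hcpt : ∀ i ∈ I, IsCompact (Kf i)) (hconv : ∀ i ∈ I, Convex ℝ (Kf i)) :
    IsCompact (convexHull ℝ (⋃ i ∈ I, Kf i)) := by
  classical
  induction I using Finset.induction with
  | empty => simp
  | @insert a I ha ih =>
    rw [Finset.set_biUnion_insert, ← convexHull_convexHull_union_right]
    exact myIsCompact_convexHull_union (hcpt a (Finset.mem_insert_self a I))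
      (ih (fun i hi => hcpt i (Finset.mem_insert_of_mem hi))
        (fun i hi => hconv i (Finset.mem_insert_of_mem hi)))
      (hconv a (Finset.mem_insert_self a I)) (convex_convexHull ℝ _)

end AuxCompact

section Milman

variable {E : Type*} [AddCommGroup E] [Module ℝ E] [TopologicalSpace E] [T2Space E]
  [IsTopologicalAddGroup E] [ContinuousSMul ℝ E] [LocallyConvexSpace ℝ E]


/-- **Milman's theorem**. -/
lemma myMilman {t : Set E} (ht : IsCompact t)
    (hD : IsCompact (closure (convexHull ℝ t))) :
    extremePoints ℝ (closure (convexHull ℝ t)) ⊆ t := by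
  intro x hx
  by_contra hxt
  set D := closure (convexHull ℝ t) with hDdef
  have hDconv : Convex ℝ D := (convex_convexHull ℝ t).closure
  set A : Set E := (fun y => x - y) '' t with hAdef
  have hAcpt : IsCompact A := ht.image (by fun_prop)
  have h0A : (0 : E) ∉ A := by
    rintro ⟨y, hy, h0⟩
    have hxy : x = y := sub_eq_zero.1 h0
    exact hxt (hxy ▸ hy)
  have hAc : Aᶜ ∈ nhds (0 : E) := (hAcpt.isClosed.isOpen_compl).mem_nhds h0A
  obtain ⟨V, hVmem, hVclosed, hVsub⟩ := exists_mem_nhds_isClosed_subset hAc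
  obtain ⟨U, ⟨hUmem, hUconv⟩, hUV⟩ := (LocallyConvexSpace.convex_basis_zero ℝ E).mem_iff.1 hVmem
  have hclU : closure U ⊆ V := closure_minimal hUV hVclosed
  -- finite cover of `t` by translates of `U`
  obtain ⟨T, hTt, hTcov⟩ := ht.elim_nhds_subcover (fun y => (fun z => y + z) '' U)
    (fun y _ => by
      have := (Homeomorph.addLeft y).isOpenMap.image_mem_nhds hUmem
      simpa using this)
  set Kf : E → Set E := fun y => closure (convexHull ℝ (t ∩ ((fun z => y + z) '' U))) with hKf
  have hKfD : ∀ y, Kf y ⊆ D := fun y =>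
    closure_mono (convexHull_mono inter_subset_left)
  have hKfcpt : ∀ y, IsCompact (Kf y) := fun y =>
    hD.of_isClosed_subset isClosed_closure (hKfD y)
  have hKfconv : ∀ y, Convex ℝ (Kf y) := fun y => (convex_convexHull ℝ _).closure
  have htsub : t ⊆ ⋃ y ∈ T, Kf y := by
    intro z hz
    obtain ⟨y, hyT, hzy⟩ := mem_iUnion₂.1 (hTcov hz)
    exact mem_iUnion₂.2 ⟨y, hyT, subset_closure (subset_convexHull ℝ _ ⟨hz, hzy⟩)⟩
  set M := convexHull ℝ (⋃ y ∈ T, Kf y) with hM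
  have hMcpt : IsCompact M :=
    myIsCompact_convexHull_biUnion T (fun y => Kf y) (fun i _ => hKfcpt _) (fun i _ => hKfconv _)
  have hDM : D ⊆ M := closure_minimal (convexHull_mono htsub) hMcpt.isClosed
  -- x lies in some Kf y
  have hx' := (hDconv.mem_extremePoints_iff_mem_diff_convexHull_diff).1 hx
  have hxU : x ∈ ⋃ y ∈ T, Kf y := by
    by_contra hxnot
    apply hx'.2
    refine convexHull_mono ?_ (hDM hx'.1)
    intro z hz
    exact ⟨iUnion₂_subset (fun y _ => hKfD y) hz, fun h => hxnot (h ▸ hz)⟩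
  obtain ⟨y, hyT, hxK⟩ := mem_iUnion₂.1 hxU
  -- hence x ∈ closure (y + U), so x - y ∈ closure U ⊆ V ⊆ Aᶜ, contradiction
  have hKy : Kf y ⊆ closure ((fun z => y + z) '' U) :=
    closure_mono (convexHull_min inter_subset_right (hUconv.translate y))
  have hxy : x - y ∈ closure U := by
    have hcont : Continuous (fun z : E => z - y) := by fun_prop
    have : (fun z : E => z - y) x ∈
        (fun z : E => z - y) '' closure ((fun z => y + z) '' U) :=
      mem_image_of_mem _ (hKy hxK)
    have h2 := (image_closure_subset_closure_image hcont) this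
    have himg : (fun z : E => z - y) '' ((fun z => y + z) '' U) = U := by
      rw [image_image]; simp
    rw [himg] at h2
    exact h2
  exact hVsub (hclU hxy) ⟨y, hTt y hyT, rfl⟩

end Milman

lemma myLCS_weakDual (E' : Type*) [NormedAddCommGroup E'] [NormedSpace ℝ E'] :
    LocallyConvexSpace ℝ (WeakDual ℝ E') := by
  exact WeakBilin.locallyConvexSpace (B := topDualPairing ℝ E')

section MainAux

variable {K : Type*} [TopologicalSpace K] [CompactSpace K]

lemma myContinuous_deltaPhi (Φ : Submodule ℝ C(K, ℝ)) : Continuous (deltaPhi Φ) :=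
  WeakBilin.continuous_of_continuous_eval _ (fun φ => (φ : C(K, ℝ)).continuous)

lemma myDeltaPhi_inj (Φ : Submodule ℝ C(K, ℝ))
    (hsep : ∀ x y : K, x ≠ y → ∃ φ ∈ Φ, φ x ≠ φ y) :
    Function.Injective (deltaPhi Φ) := by
  intro x y h
  by_contra hxy
  obtain ⟨φ, hφ, hne⟩ := hsep x y hxy
  exact hne (congrArg (fun Q : WeakDual ℝ ↥Φ => Q ⟨φ, hφ⟩) h)

noncomputable instance myDualNAG (Φ : Submodule ℝ C(K, ℝ)) : NormedAddCommGroup (StrongDual ℝ ↥Φ) :=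
  @ContinuousLinearMap.toNormedAddCommGroup ℝ ℝ ↥Φ ℝ _ _ _ _ _ _ (RingHom.id ℝ) _

noncomputable instance myDualNS (Φ : Submodule ℝ C(K, ℝ)) : NormedSpace ℝ (StrongDual ℝ ↥Φ) :=
  ContinuousLinearMap.toNormedSpace (σ₁₂ := RingHom.id ℝ) (E := ↥Φ) (F := ℝ) (𝕜' := ℝ)

lemma myDeltaPhi_mem_ball (Φ : Submodule ℝ C(K, ℝ)) (x : K) :
    deltaPhi Φ x ∈ WeakDual.toStrongDual ⁻¹' Metric.closedBall 0 1 := by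
  simp only [Set.mem_preimage, mem_closedBall_zero_iff]
  apply ContinuousLinearMap.opNorm_le_bound _ zero_le_one
  intro φ
  rw [one_mul]
  exact (φ : C(K, ℝ)).norm_coe_le_norm x

set_option maxHeartbeats 4000000 in
lemma myD_isCompact (Φ : Submodule ℝ C(K, ℝ)) (S : Set K) :
    IsCompact (closure (convexHull ℝ (deltaPhi Φ '' S))) := by
  have hBcpt : IsCompact (WeakDual.toStrongDual ⁻¹' Metric.closedBall (0 : StrongDual ℝ ↥Φ) 1) :=
    WeakDual.isCompact_closedBall (𝕜 := ℝ) (E := ↥Φ) 0 1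
  have hBconv : Convex ℝ (WeakDual.toStrongDual ⁻¹' Metric.closedBall (0 : StrongDual ℝ ↥Φ) 1) := by
    intro a ha b hb p q hp hq hpq
    simp only [Set.mem_preimage, mem_closedBall_zero_iff] at *
    calc ‖WeakDual.toStrongDual (p • a + q • b)‖
        ≤ ‖WeakDual.toStrongDual (p • a)‖ + ‖WeakDual.toStrongDual (q • b)‖ := norm_add_le _ _
      _ ≤ p * ‖WeakDual.toStrongDual a‖ + q * ‖WeakDual.toStrongDual b‖ := by
          rw [_root_.map_smul, _root_.map_smul, norm_smul, norm_smul, Real.norm_of_nonneg hp,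
            Real.norm_of_nonneg hq]
      _ ≤ p * 1 + q * 1 := by
          gcongr
      _ = 1 := by linarith
  have hsub : closure (convexHull ℝ (deltaPhi Φ '' S)) ⊆
      WeakDual.toStrongDual ⁻¹' Metric.closedBall 0 1 := by
    apply closure_minimal _ hBcpt.isClosed
    apply convexHull_min _ hBconv
    rintro Q ⟨x, _, rfl⟩
    exact myDeltaPhi_mem_ball Φ x
  exact hBcpt.of_isClosed_subset isClosed_closure hsub

set_option maxHeartbeats 4000000 in
/-- Key lemma: a convex-trace set containing the Φ-extreme points of a compact set `S`
contains `S`. -/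
lemma myKey (Φ : Submodule ℝ C(K, ℝ))
    (hsep : ∀ x y : K, x ≠ y → ∃ φ ∈ Φ, φ x ≠ φ y)
    (hconst : ∀ c : ℝ, ContinuousMap.const K c ∈ Φ)
    (S : Set K) (hS : IsCompact S) (C : Set K)
    (hC : TraceConvexSet Φ (hconst 1) C) (hext : ExtPhi Φ S ⊆ C) : S ⊆ C := by
  haveI := myLCS_weakDual ↥Φ
  obtain ⟨hCcl, Ch, _, hChcl, hChconv, hCheq⟩ := hC
  set t : Set (WeakDual ℝ ↥Φ) := deltaPhi Φ '' S with ht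
  have htcpt : IsCompact t := hS.image (myContinuous_deltaPhi Φ)
  set D := closure (convexHull ℝ t) with hDdef
  have hDcpt : IsCompact D := myD_isCompact Φ S
  have hMil : extremePoints ℝ D ⊆ t := myMilman (E := WeakDual ℝ ↥Φ) htcpt hDcpt
  have hextCh : extremePoints ℝ D ⊆ Ch := by
    intro Q hQ
    obtain ⟨y, hyS, rfl⟩ := hMil hQ
    have hyE : y ∈ ExtPhi Φ S := ⟨hyS, hQ⟩
    have : deltaPhi Φ y ∈ deltaPhi Φ '' C := ⟨y, hext hyE, rfl⟩
    rw [hCheq] at this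
    exact this.2
  have hDCh : D ⊆ Ch := by
    have hKM := closure_convexHull_extremePoints hDcpt ((convex_convexHull ℝ t).closure)
    calc D = closure (convexHull ℝ (extremePoints ℝ D)) := hKM.symm
      _ ⊆ Ch := closure_minimal (convexHull_min hextCh hChconv) hChcl
  intro x hx
  have hxCh : deltaPhi Φ x ∈ Ch := hDCh (subset_closure (subset_convexHull ℝ t ⟨x, hx, rfl⟩))
  have : deltaPhi Φ x ∈ deltaPhi Φ '' C := by
    rw [hCheq]
    exact ⟨⟨x, trivial, rfl⟩, hxCh⟩
  obtain ⟨c, hc, hceq⟩ := this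
  rwa [← myDeltaPhi_inj Φ hsep hceq]

set_option maxHeartbeats 4000000 in
lemma myHull_eq (Φ : Submodule ℝ C(K, ℝ))
    (hsep : ∀ x y : K, x ≠ y → ∃ φ ∈ Φ, φ x ≠ φ y)
    (hconst : ∀ c : ℝ, ContinuousMap.const K c ∈ Φ)
    (S : Set K) (hS : IsCompact S) :
    traceCoHull Φ (hconst 1) S = traceCoHull Φ (hconst 1) (ExtPhi Φ S) := by
  apply subset_antisymm
  · intro x hx
    rw [traceCoHull, Set.mem_sInter] at hx ⊢
    intro C hC
    exact hx C ⟨hC.1, myKey Φ hsep hconst S hS C hC.1 hC.2⟩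
  · intro x hx
    rw [traceCoHull, Set.mem_sInter] at hx ⊢
    intro C hC
    exact hx C ⟨hC.1, fun y hy => hC.2 hy.1⟩

end MainAux

set_option maxHeartbeats 4000000 in
/-- **Abstract Krein–Milman theorem.** For every compact `S ⊆ K`,
`co_Φ(S) = co_Φ(Ext_Φ(S))`; in particular every compact `Φ`-convex-trace set is the
`Φ`-trace convex hull of its `Φ`-extreme points. -/
theorem stmt9 {K : Type*} [TopologicalSpace K] [CompactSpace K] [T2Space K]
    (Φ : Submodule ℝ C(K, ℝ)) (hΦclosed : IsClosed (Φ : Set C(K, ℝ)))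
    (hsep : ∀ x y : K, x ≠ y → ∃ φ ∈ Φ, φ x ≠ φ y)
    (hconst : ∀ c : ℝ, ContinuousMap.const K c ∈ Φ)
    (S : Set K) (hS : IsCompact S) :
    traceCoHull Φ (hconst 1) S = traceCoHull Φ (hconst 1) (ExtPhi Φ S) ∧
    ∀ C : Set K, IsCompact C → TraceConvexSet Φ (hconst 1) C →
      C = traceCoHull Φ (hconst 1) (ExtPhi Φ C) := by
  constructor
  · exact myHull_eq Φ hsep hconst S hS
  · intro C hCcpt hCtc
    have h1 := myHull_eq Φ hsep hconst C hCcpt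
    have h2 : traceCoHull Φ (hconst 1) C = C :=
      subset_antisymm (Set.sInter_subset_of_mem ⟨hCtc, subset_rfl⟩)
        (fun x hx => Set.mem_sInter.2 fun A hA => hA.2 hx)
    rw [← h1, h2]
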